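/- For each natural number M, and complex parameters a1, a2, b1 with s1 = b1 - a1 - a2, the expression Γ(a1+n)Γ(a2+n)/(Γ(b1+n)Γ(-s1+n)) minus the partial sum 1 + Σ_{m=1}^{M} (s1+a1)_m (s1+a2)_m / (m! (1+s1-n)_m) is O(n^{-M-1}) as n → ∞. -/

import Mathlib

open Filter Asymptotics Finset Topology

namespace DingleAux

noncomputable section

/-- numerator coefficient -/
def cc (a1 a2 s1 : ℂ) (m : ℕ) : ℂ :=
  (ascPochhammer ℂ m).eval (s1 + a1) * (ascPochhammer ℂ m).eval (s1 + a2)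

/-- denominator Pochhammer -/
def pp (s1 : ℂ) (m n : ℕ) : ℂ := (ascPochhammer ℂ m).eval (1 + s1 - n)

def tt (a1 a2 s1 : ℂ) (m n : ℕ) : ℂ :=
  cc a1 a2 s1 m / ((m.factorial : ℂ) * pp s1 m n)

def ww (a1 a2 s1 : ℂ) (m n : ℕ) : ℂ :=
  match m with
  | 0 => 0
  | (m+1) => cc a1 a2 s1 (m+1) / ((m.factorial : ℂ) * pp s1 m n)

def SS (a1 a2 s1 : ℂ) (M n : ℕ) : ℂ := ∑ m ∈ range (M+1), tt a1 a2 s1 m n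

def ff (a1 a2 b1 s1 : ℂ) (n : ℕ) : ℂ :=
  Complex.Gamma (a1 + n) * Complex.Gamma (a2 + n) /
    (Complex.Gamma (b1 + n) * Complex.Gamma (-s1 + n))

def RR (a1 a2 b1 s1 : ℂ) (M n : ℕ) : ℂ :=
  ff a1 a2 b1 s1 n - SS a1 a2 s1 M n

lemma pp_zero (s1 : ℂ) (n : ℕ) : pp s1 0 n = 1 := by simp [pp]

lemma pp_succ (s1 : ℂ) (m n : ℕ) :
    pp s1 (m+1) n = pp s1 m n * (1 + s1 - n + m) := by
  simp [pp, ascPochhammer_succ_eval]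

lemma pp_succ_shift (s1 : ℂ) (m n : ℕ) :
    pp s1 (m+1) (n+1) = (s1 - n) * pp s1 m n := by
  unfold pp
  rw [ascPochhammer_succ_left]
  rw [Polynomial.eval_mul, Polynomial.eval_comp]
  push_cast
  congr 1
  · simp; ring
  · congr 1; simp; ring

lemma cc_succ (a1 a2 s1 : ℂ) (m : ℕ) :
    cc a1 a2 s1 (m+1) = cc a1 a2 s1 m * ((s1 + a1 + m) * (s1 + a2 + m)) := by
  simp [cc, ascPochhammer_succ_eval]; ring

lemma step_eq (a1 a2 b1 s1 : ℂ) (hs : s1 = b1 - a1 - a2) (m n : ℕ)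
    (h1 : pp s1 m n ≠ 0) (hsn : s1 - (n:ℂ) ≠ 0) :
    (a1+n)*(a2+n) * tt a1 a2 s1 m n - (b1+n)*((n:ℂ)-s1) * tt a1 a2 s1 m (n+1)
      = ww a1 a2 s1 (m+1) n - ww a1 a2 s1 m n := by
  have hb : b1 = s1 + a1 + a2 := by rw [hs]; ring
  subst hb
  cases m with
  | zero =>
      have w1 : ww a1 a2 s1 1 n = cc a1 a2 s1 1 / ((1:ℂ) * 1) := by
        show cc a1 a2 s1 1 / ((Nat.factorial 0 : ℂ) * pp s1 0 n) = _
        rw [pp_zero]; norm_num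
      have w0 : ww a1 a2 s1 0 n = 0 := rfl
      have t0 : ∀ nn, tt a1 a2 s1 0 nn = 1 := by
        intro nn; simp [tt, cc, pp]
      have c1 : cc a1 a2 s1 1 = (s1+a1)*(s1+a2) := by
        simp [cc, ascPochhammer_one]
      rw [w1, w0, t0, t0, c1]
      push_cast
      ring
  | succ k =>
      rw [pp_succ] at h1
      have hkn : pp s1 k n ≠ 0 := left_ne_zero_of_mul h1
      have hfac : (1 + s1 - (n:ℂ) + k) ≠ 0 := right_ne_zero_of_mul h1
      have e1 : tt a1 a2 s1 (k+1) n
          = cc a1 a2 s1 (k+1) / (((k+1).factorial : ℂ) * (pp s1 k n * (1 + s1 - n + k))) := by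
        rw [tt, pp_succ]
      have e2 : tt a1 a2 s1 (k+1) (n+1)
          = cc a1 a2 s1 (k+1) / (((k+1).factorial : ℂ) * ((s1 - n) * pp s1 k n)) := by
        rw [tt, pp_succ_shift]
      have e3 : ww a1 a2 s1 (k+2) n
          = cc a1 a2 s1 (k+1) * ((s1 + a1 + (k+1)) * (s1 + a2 + (k+1)))
              / (((k+1).factorial : ℂ) * (pp s1 k n * (1 + s1 - n + k))) := by
        rw [ww, cc_succ, pp_succ]
        push_cast
        ring_nf
      have e4 : ww a1 a2 s1 (k+1) n
          = cc a1 a2 s1 (k+1) / ((k.factorial : ℂ) * pp s1 k n) := rfl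
      have hfact : ((k.factorial : ℂ)) ≠ 0 := by
        exact_mod_cast Nat.cast_ne_zero.mpr k.factorial_ne_zero
      have hfact1 : (((k+1).factorial : ℕ) : ℂ) ≠ 0 := by
        exact_mod_cast Nat.cast_ne_zero.mpr (k+1).factorial_ne_zero
      have hfs : (((k+1).factorial : ℕ) : ℂ) = (k+1) * (k.factorial : ℕ) := by
        push_cast [Nat.factorial_succ]; ring
      rw [hfs] at e1 e2 e3
      have hk1 : ((k:ℂ)+1) ≠ 0 := by
        have : ((k+1:ℕ):ℂ) ≠ 0 := Nat.cast_ne_zero.mpr k.succ_ne_zero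
        push_cast at this; exact this
      have hD1 : ((k:ℂ)+1) * (k.factorial:ℂ) * (pp s1 k n * (1 + s1 - n + k)) ≠ 0 :=
        mul_ne_zero (mul_ne_zero hk1 hfact) (mul_ne_zero hkn hfac)
      have hD2 : ((k:ℂ)+1) * (k.factorial:ℂ) * ((s1 - n) * pp s1 k n) ≠ 0 :=
        mul_ne_zero (mul_ne_zero hk1 hfact) (mul_ne_zero hsn hkn)
      have hD4 : (k.factorial:ℂ) * pp s1 k n ≠ 0 := mul_ne_zero hfact hkn
      rw [e1, e2, e3, e4]
      simp only [← mul_div_assoc]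
      rw [div_sub_div _ _ hD1 hD2, div_sub_div _ _ hD1 hD4,
        div_eq_div_iff (mul_ne_zero hD1 hD2) (mul_ne_zero hD1 hD4)]
      push_cast
      ring

lemma D_eq (a1 a2 b1 s1 : ℂ) (hs : s1 = b1 - a1 - a2) (M n : ℕ)
    (h1 : ∀ m ≤ M, pp s1 m n ≠ 0) (hsn : s1 - (n:ℂ) ≠ 0) :
    (a1+n)*(a2+n) * SS a1 a2 s1 M n - (b1+n)*((n:ℂ)-s1) * SS a1 a2 s1 M (n+1)
      = cc a1 a2 s1 (M+1) / ((M.factorial : ℂ) * pp s1 M n) := by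
  have : (a1+n)*(a2+n) * SS a1 a2 s1 M n - (b1+n)*((n:ℂ)-s1) * SS a1 a2 s1 M (n+1)
      = ∑ m ∈ range (M+1), (ww a1 a2 s1 (m+1) n - ww a1 a2 s1 m n) := by
    rw [SS, SS, mul_sum, mul_sum, ← sum_sub_distrib]
    refine sum_congr rfl fun m hm => ?_
    exact step_eq a1 a2 b1 s1 hs m n (h1 m (Nat.lt_succ_iff.mp (mem_range.mp hm))) hsn
  rw [this, sum_range_sub (ww a1 a2 s1 · n)]
  show ww a1 a2 s1 (M+1) n - ww a1 a2 s1 0 n = _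
  rw [show ww a1 a2 s1 0 n = 0 from rfl, sub_zero]
  rfl

lemma ff_rec (a1 a2 b1 s1 : ℂ) (n : ℕ)
    (ha1 : a1 + (n:ℂ) ≠ 0) (ha2 : a2 + (n:ℂ) ≠ 0) (hb : b1 + (n:ℂ) ≠ 0)
    (hd : -s1 + (n:ℂ) ≠ 0)
    (hGb : Complex.Gamma (b1 + n) ≠ 0) (hGd : Complex.Gamma (-s1 + n) ≠ 0) :
    ff a1 a2 b1 s1 (n+1) * ((b1+n)*((n:ℂ)-s1))
      = ((a1+n)*(a2+n)) * ff a1 a2 b1 s1 n := by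
  have hd' : (n:ℂ) - s1 ≠ 0 := fun h => hd (by rw [← h]; ring)
  have e1 : a1 + ((n+1:ℕ):ℂ) = (a1 + n) + 1 := by push_cast; ring
  have e2 : a2 + ((n+1:ℕ):ℂ) = (a2 + n) + 1 := by push_cast; ring
  have e3 : b1 + ((n+1:ℕ):ℂ) = (b1 + n) + 1 := by push_cast; ring
  have e4 : -s1 + ((n+1:ℕ):ℂ) = (-s1 + n) + 1 := by push_cast; ring
  rw [ff, ff, e1, e2, e3, e4, Complex.Gamma_add_one _ ha1, Complex.Gamma_add_one _ ha2,
    Complex.Gamma_add_one _ hb, Complex.Gamma_add_one _ hd]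
  field_simp
  ring

lemma R_diff (a1 a2 b1 s1 : ℂ) (hs : s1 = b1 - a1 - a2) (M n : ℕ)
    (ha1 : a1 + (n:ℂ) ≠ 0) (ha2 : a2 + (n:ℂ) ≠ 0) (hb : b1 + (n:ℂ) ≠ 0)
    (hd : -s1 + (n:ℂ) ≠ 0)
    (hGb : Complex.Gamma (b1 + n) ≠ 0) (hGd : Complex.Gamma (-s1 + n) ≠ 0)
    (h1 : ∀ m ≤ M, pp s1 m n ≠ 0) :
    RR a1 a2 b1 s1 M n - RR a1 a2 b1 s1 M (n+1)
      = -((b1*s1+a1*a2) / ((b1+n)*((n:ℂ)-s1))) * RR a1 a2 b1 s1 M n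
        - (cc a1 a2 s1 (M+1) / ((M.factorial : ℂ) * pp s1 M n)) / ((b1+n)*((n:ℂ)-s1)) := by
  have hd' : (n:ℂ) - s1 ≠ 0 := fun h => hd (by rw [← h]; ring)
  have hsn : s1 - (n:ℂ) ≠ 0 := fun h => hd' (by rw [← neg_sub s1 (n:ℂ), h]; ring)
  have hrec := ff_rec a1 a2 b1 s1 n ha1 ha2 hb hd hGb hGd
  have hD := D_eq a1 a2 b1 s1 hs M n h1 hsn
  have hfact : ((M.factorial : ℕ) : ℂ) ≠ 0 := Nat.cast_ne_zero.mpr M.factorial_ne_zero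
  have hpM : pp s1 M n ≠ 0 := h1 M le_rfl
  rw [eq_div_iff (mul_ne_zero hfact hpM)] at hD
  have hb1 : b1 = s1 + a1 + a2 := by rw [hs]; ring
  subst hb1
  have key : (RR a1 a2 (s1+a1+a2) s1 M n - RR a1 a2 (s1+a1+a2) s1 M (n+1))
        * ((((s1+a1+a2)+n)*((n:ℂ)-s1)) * ((M.factorial : ℂ) * pp s1 M n))
      = -(((s1+a1+a2)*s1+a1*a2) * RR a1 a2 (s1+a1+a2) s1 M n)
          * ((M.factorial : ℂ) * pp s1 M n) - cc a1 a2 s1 (M+1) := by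
    unfold RR
    linear_combination (-((M.factorial : ℂ) * pp s1 M n)) * hrec - hD
  have hDP : ((((s1+a1+a2)+(n:ℂ))*((n:ℂ)-s1)) * ((M.factorial : ℂ) * pp s1 M n)) ≠ 0 :=
    mul_ne_zero (mul_ne_zero hb hd') (mul_ne_zero hfact hpM)
  have expand : -(((s1+a1+a2)*s1+a1*a2) / (((s1+a1+a2)+(n:ℂ))*((n:ℂ)-s1)))
          * RR a1 a2 (s1+a1+a2) s1 M n
        - (cc a1 a2 s1 (M+1) / ((M.factorial : ℂ) * pp s1 M n))
            / (((s1+a1+a2)+(n:ℂ))*((n:ℂ)-s1))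
      = (-(((s1+a1+a2)*s1+a1*a2) * RR a1 a2 (s1+a1+a2) s1 M n)
          * ((M.factorial : ℂ) * pp s1 M n) - cc a1 a2 s1 (M+1))
        / ((((s1+a1+a2)+(n:ℂ))*((n:ℂ)-s1)) * ((M.factorial : ℂ) * pp s1 M n)) := by
    field_simp
  rw [expand, eq_div_iff hDP]
  linear_combination key

lemma ne_zero_of_re_pos' {w : ℂ} (h : 0 < w.re) : w ≠ 0 := by
  intro h0; rw [h0] at h; simp at h

lemma Gamma_prod {z : ℂ} (hz : 0 < z.re) (n : ℕ) :
    Complex.Gamma (z + n + 1) = Complex.Gamma z * ∏ j ∈ range (n+1), (z + j) := by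
  induction n with
  | zero =>
      rw [show z + ((0:ℕ):ℂ) + 1 = z + 1 by push_cast; ring,
        Complex.Gamma_add_one _ (ne_zero_of_re_pos' hz), prod_range_one]
      push_cast
      ring
  | succ n ih =>
      have harg : z + ((n+1:ℕ):ℂ) + 1 = (z + n + 1) + 1 := by push_cast; ring
      have hne : z + (n:ℂ) + 1 ≠ 0 := by
        apply ne_zero_of_re_pos'
        simp only [Complex.add_re, Complex.natCast_re, Complex.one_re]
        positivity
      rw [harg, Complex.Gamma_add_one _ hne, ih]
      conv_rhs => rw [prod_range_succ]
      push_cast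
      ring

lemma PP_ne {z : ℂ} (hz : 0 < z.re) (n : ℕ) :
    ∏ j ∈ range (n+1), (z + (j:ℂ)) ≠ 0 := by
  refine prod_ne_zero_iff.mpr fun j _ => ?_
  apply ne_zero_of_re_pos'
  simp only [Complex.add_re, Complex.natCast_re]
  positivity

lemma GS_mul {z : ℂ} (hz : 0 < z.re) (n : ℕ) :
    Complex.GammaSeq z n * ∏ j ∈ range (n+1), (z + (j:ℂ))
      = (n:ℂ)^z * (n.factorial : ℂ) := by
  rw [Complex.GammaSeq, div_mul_cancel₀ _ (PP_ne hz n)]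

lemma GS_ne {z : ℂ} (hz : 0 < z.re) {n : ℕ} (hn : 1 ≤ n) :
    Complex.GammaSeq z n ≠ 0 := by
  intro h0
  have := GS_mul hz n
  rw [h0, zero_mul] at this
  have hnz : (n:ℂ) ≠ 0 := Nat.cast_ne_zero.mpr (by omega)
  have h1 : (n:ℂ)^z ≠ 0 := by
    rw [Complex.cpow_def_of_ne_zero hnz]
    exact Complex.exp_ne_zero _
  have h2 : ((n.factorial : ℕ):ℂ) ≠ 0 := Nat.cast_ne_zero.mpr n.factorial_ne_zero
  exact (mul_ne_zero h1 h2) this.symm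

lemma ff_tendsto (a1 a2 b1 s1 : ℂ) (hs : s1 = b1 - a1 - a2) :
    Tendsto (ff a1 a2 b1 s1) atTop (𝓝 1) := by
  obtain ⟨n0, hn0⟩ := exists_nat_gt (‖a1‖ + ‖a2‖ + ‖b1‖ + ‖s1‖)
  have hre : ∀ x : ℂ, -‖x‖ ≤ x.re := fun x => by
    have := Complex.abs_re_le_norm x
    exact (abs_le.mp this).1
  have hnorm : ∀ x : ℂ, ‖x‖ < n0 → 0 < (x + (n0:ℂ)).re := fun x hx => by
    simp only [Complex.add_re, Complex.natCast_re]
    have := hre x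
    linarith
  have h1 := norm_nonneg a1
  have h2 := norm_nonneg a2
  have h3 := norm_nonneg b1
  have h4 := norm_nonneg s1
  have hns : ‖-s1‖ = ‖s1‖ := norm_neg s1
  set z := a1 + (n0:ℂ) with hzdef
  set w := a2 + (n0:ℂ) with hwdef
  set u := b1 + (n0:ℂ) with hudef
  set v := -s1 + (n0:ℂ) with hvdef
  have hz : 0 < z.re := hnorm a1 (by linarith)
  have hw : 0 < w.re := hnorm a2 (by linarith)
  have hu : 0 < u.re := hnorm b1 (by linarith)
  have hv : 0 < v.re := hnorm (-s1) (by rw [hns]; linarith)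
  have hzw : z + w = u + v := by rw [hzdef, hwdef, hudef, hvdef, hs]; ring
  have hΓz : Complex.Gamma z ≠ 0 := Complex.Gamma_ne_zero_of_re_pos hz
  have hΓw : Complex.Gamma w ≠ 0 := Complex.Gamma_ne_zero_of_re_pos hw
  have hΓu : Complex.Gamma u ≠ 0 := Complex.Gamma_ne_zero_of_re_pos hu
  have hΓv : Complex.Gamma v ≠ 0 := Complex.Gamma_ne_zero_of_re_pos hv
  set P : ℂ → ℕ → ℂ := fun x n => ∏ j ∈ range (n+1), (x + (j:ℂ)) with hPdef
  have hP : ∀ n : ℕ, 1 ≤ n →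
      P z n * P w n / (P u n * P v n)
        = Complex.GammaSeq u n * Complex.GammaSeq v n
            / (Complex.GammaSeq z n * Complex.GammaSeq w n) := by
    intro n hn
    have hnz : (n:ℂ) ≠ 0 := Nat.cast_ne_zero.mpr (by omega)
    have cz := GS_mul hz n
    have cw := GS_mul hw n
    have cu := GS_mul hu n
    have cv := GS_mul hv n
    rw [div_eq_div_iff (mul_ne_zero (PP_ne hu n) (PP_ne hv n))
      (mul_ne_zero (GS_ne hz hn) (GS_ne hw hn))]
    have hcpow : (n:ℂ)^z * (n:ℂ)^w = (n:ℂ)^u * (n:ℂ)^v := by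
      rw [← Complex.cpow_add _ _ hnz, ← Complex.cpow_add _ _ hnz, hzw]
    calc P z n * P w n * (Complex.GammaSeq z n * Complex.GammaSeq w n)
        = (Complex.GammaSeq z n * P z n) * (Complex.GammaSeq w n * P w n) := by ring
      _ = ((n:ℂ)^z * (n.factorial:ℂ)) * ((n:ℂ)^w * (n.factorial:ℂ)) := by rw [cz, cw]
      _ = ((n:ℂ)^z * (n:ℂ)^w) * ((n.factorial:ℂ) * (n.factorial:ℂ)) := by ring
      _ = ((n:ℂ)^u * (n:ℂ)^v) * ((n.factorial:ℂ) * (n.factorial:ℂ)) := by rw [hcpow]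
      _ = ((n:ℂ)^u * (n.factorial:ℂ)) * ((n:ℂ)^v * (n.factorial:ℂ)) := by ring
      _ = (Complex.GammaSeq u n * P u n) * (Complex.GammaSeq v n * P v n) := by rw [cu, cv]
      _ = Complex.GammaSeq u n * Complex.GammaSeq v n * (P u n * P v n) := by ring
  have hlim : Tendsto (fun n => P z n * P w n / (P u n * P v n)) atTop
      (𝓝 (Complex.Gamma u * Complex.Gamma v / (Complex.Gamma z * Complex.Gamma w))) := by
    refine Tendsto.congr' ?_ (((Complex.GammaSeq_tendsto_Gamma u).mul
      (Complex.GammaSeq_tendsto_Gamma v)).div ((Complex.GammaSeq_tendsto_Gamma z).mul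
      (Complex.GammaSeq_tendsto_Gamma w)) (mul_ne_zero hΓz hΓw))
    filter_upwards [eventually_ge_atTop 1] with n hn
    exact (hP n hn).symm
  have hff : ∀ n : ℕ, ff a1 a2 b1 s1 (n + (n0+1))
      = (Complex.Gamma z * Complex.Gamma w / (Complex.Gamma u * Complex.Gamma v))
        * (P z n * P w n / (P u n * P v n)) := by
    intro n
    have e1 : a1 + ((n + (n0+1) : ℕ):ℂ) = z + n + 1 := by rw [hzdef]; push_cast; ring
    have e2 : a2 + ((n + (n0+1) : ℕ):ℂ) = w + n + 1 := by rw [hwdef]; push_cast; ring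
    have e3 : b1 + ((n + (n0+1) : ℕ):ℂ) = u + n + 1 := by rw [hudef]; push_cast; ring
    have e4 : -s1 + ((n + (n0+1) : ℕ):ℂ) = v + n + 1 := by rw [hvdef]; push_cast; ring
    rw [ff, e1, e2, e3, e4, Gamma_prod hz n, Gamma_prod hw n, Gamma_prod hu n,
      Gamma_prod hv n]
    rw [hPdef]
    field_simp
  have hval : (Complex.Gamma z * Complex.Gamma w / (Complex.Gamma u * Complex.Gamma v))
      * (Complex.Gamma u * Complex.Gamma v / (Complex.Gamma z * Complex.Gamma w)) = 1 := by
    field_simp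
  have hshift : Tendsto (fun n => ff a1 a2 b1 s1 (n + (n0+1))) atTop (𝓝 1) := by
    rw [← hval]
    exact Tendsto.congr (fun n => (hff n).symm) (tendsto_const_nhds.mul hlim)
  exact (tendsto_add_atTop_iff_nat (n0+1)).mp hshift

lemma tt_zero (a1 a2 s1 : ℂ) (n : ℕ) : tt a1 a2 s1 0 n = 1 := by
  simp [tt, cc, pp]

lemma pp_lower (s1 : ℂ) (M : ℕ) {n : ℕ} (hn : 2*(‖s1‖ + M + 2) ≤ (n:ℝ)) :
    ∀ m, m ≤ M + 1 → ((n:ℝ)/2)^m ≤ ‖pp s1 m n‖ := by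
  intro m
  induction m with
  | zero => intro _; simp [pp]
  | succ k ih =>
      intro hk
      have hkM : k ≤ M + 1 := by omega
      have hbound := ih hkM
      rw [pp_succ, norm_mul]
      have hfac : (n:ℝ)/2 ≤ ‖1 + s1 - (n:ℂ) + k‖ := by
        have h1 : ‖1 + s1 - (n:ℂ) + k‖ = ‖(n:ℂ) - (1 + s1 + k)‖ := by
          rw [← norm_neg]; congr 1; ring
        have h2 : ‖(n:ℂ)‖ - ‖1 + s1 + (k:ℂ)‖ ≤ ‖(n:ℂ) - (1 + s1 + k)‖ :=
          norm_sub_norm_le _ _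
        have h3 : ‖1 + s1 + (k:ℂ)‖ ≤ 1 + ‖s1‖ + k := by
          calc ‖1 + s1 + (k:ℂ)‖ ≤ ‖1 + s1‖ + ‖(k:ℂ)‖ := norm_add_le _ _
            _ ≤ ‖(1:ℂ)‖ + ‖s1‖ + ‖(k:ℂ)‖ := by linarith [norm_add_le (1:ℂ) s1]
            _ = 1 + ‖s1‖ + k := by simp
        have h4 : ‖(n:ℂ)‖ = (n:ℝ) := by simp
        have h5 : (k:ℝ) ≤ M + 1 := by exact_mod_cast Nat.cast_le.mpr hkM
        rw [h1]
        have hM0 : (0:ℝ) ≤ M := Nat.cast_nonneg M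
        have hs0 : (0:ℝ) ≤ ‖s1‖ := norm_nonneg s1
        nlinarith [h2, h3]
      have hpos : (0:ℝ) ≤ ((n:ℝ)/2)^k := by positivity
      calc ((n:ℝ)/2)^(k+1) = ((n:ℝ)/2)^k * ((n:ℝ)/2) := by rw [pow_succ]
        _ ≤ ‖pp s1 k n‖ * ‖1 + s1 - (n:ℂ) + k‖ := by
            apply mul_le_mul hbound hfac (by positivity) (le_trans hpos hbound)

lemma SS_tendsto (a1 a2 s1 : ℂ) (M : ℕ) :
    Tendsto (SS a1 a2 s1 M) atTop (𝓝 1) := by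
  have : Tendsto (fun n => ∑ m ∈ range (M+1), tt a1 a2 s1 m n) atTop
      (𝓝 (∑ m ∈ range (M+1), if m = 0 then (1:ℂ) else 0)) := by
    refine tendsto_finset_sum _ fun m _ => ?_
    rcases Nat.eq_zero_or_pos m with hm | hm
    · subst hm
      simp only [if_pos rfl]
      exact Tendsto.congr (fun n => (tt_zero a1 a2 s1 n).symm) tendsto_const_nhds
    · rw [if_neg (by omega)]
      apply squeeze_zero_norm'
        (a := fun n : ℕ => (‖cc a1 a2 s1 m‖ * 2) / (n : ℝ))
      · obtain ⟨N, hN⟩ := exists_nat_gt (2*(‖s1‖ + M + 2))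
        filter_upwards [eventually_ge_atTop (N+1)] with n hn
        have hn2 : 2*(‖s1‖ + M + 2) ≤ (n:ℝ) := by
          have : (N:ℝ) ≤ n := by exact_mod_cast Nat.le_of_succ_le hn
          linarith
        have hn1 : (2:ℝ) ≤ (n:ℝ) := by
          have hs0 : (0:ℝ) ≤ ‖s1‖ := norm_nonneg s1
          have hM0 : (0:ℝ) ≤ M := Nat.cast_nonneg M
          linarith
        obtain ⟨k, rfl⟩ : ∃ k, m = k + 1 := ⟨m - 1, by omega⟩
        have hplow := pp_lower s1 M hn2 (k+1) (by
          have := mem_range.mp ‹k + 1 ∈ range (M+1)›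
          omega)
        have hfact1 : (1:ℝ) ≤ ((k+1).factorial : ℝ) := by
          exact_mod_cast (k+1).factorial_pos
        have hppn : (n:ℝ)/2 ≤ ‖pp s1 (k+1) n‖ :=
          le_trans (le_self_pow₀ (by linarith) (Nat.succ_ne_zero k)) hplow
        have hnt : ‖tt a1 a2 s1 (k+1) n‖
            = ‖cc a1 a2 s1 (k+1)‖ / (((k+1).factorial : ℝ) * ‖pp s1 (k+1) n‖) := by
          rw [tt, norm_div, norm_mul, Complex.norm_natCast]
        rw [hnt]
        calc ‖cc a1 a2 s1 (k+1)‖ / (((k+1).factorial : ℝ) * ‖pp s1 (k+1) n‖)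
            ≤ ‖cc a1 a2 s1 (k+1)‖ / (1 * ((n:ℝ)/2)) := by
              apply div_le_div_of_nonneg_left (norm_nonneg _) (by linarith)
              have hpp0 : (0:ℝ) < ‖pp s1 (k+1) n‖ := by linarith
              calc 1 * ((n:ℝ)/2) = (n:ℝ)/2 := one_mul _
                _ ≤ ‖pp s1 (k+1) n‖ := hppn
                _ = 1 * ‖pp s1 (k+1) n‖ := (one_mul _).symm
                _ ≤ ((k+1).factorial : ℝ) * ‖pp s1 (k+1) n‖ := by
                    apply mul_le_mul_of_nonneg_right hfact1 (le_of_lt hpp0)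
          _ = ‖cc a1 a2 s1 (k+1)‖ * 2 / n := by
              rw [one_mul, div_div_eq_mul_div]
      · exact tendsto_const_div_atTop_nhds_zero_nat _
  refine Tendsto.congr (fun n => rfl) (by simp at this; exact this)

lemma inv_pow_step (j k : ℕ) (hk : 1 ≤ k) :
    ((k:ℝ)⁻¹)^(j+2) ≤ 2*(((k:ℝ)⁻¹)^(j+1) - (((k+1:ℕ):ℝ))⁻¹^(j+1)) := by
  have hx : (1:ℝ) ≤ (k:ℝ) := by exact_mod_cast hk
  set x : ℝ := (k:ℝ) with hxdef
  have h0 : (0:ℝ) < x := by linarith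
  have h1 : (0:ℝ) < x+1 := by linarith
  have hcast : (((k+1:ℕ)):ℝ) = x + 1 := by push_cast; ring
  rw [hcast]
  have hba : (x+1)⁻¹ ≤ x⁻¹ := by
    apply inv_anti₀ h0; linarith
  have hpow : ((x+1)⁻¹)^(j+1) ≤ (x⁻¹)^j * (x+1)⁻¹ := by
    rw [pow_succ]
    apply mul_le_mul_of_nonneg_right _ (by positivity)
    exact pow_le_pow_left₀ (by positivity) hba j
  have hdiff : x⁻¹ - (x+1)⁻¹ = x⁻¹ * (x+1)⁻¹ := by
    field_simp
    ring
  have hlast : x⁻¹ ≤ 2 * (x+1)⁻¹ := by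
    rw [← one_div, ← one_div]
    have h2 : 2*(1/(x+1)) = 2/(x+1) := by ring
    rw [h2, div_le_div_iff₀ h0 h1]
    linarith
  calc (x⁻¹)^(j+2) = (x⁻¹)^(j+1) * x⁻¹ := by rw [pow_succ]
    _ ≤ (x⁻¹)^(j+1) * (2*(x+1)⁻¹) := by
        apply mul_le_mul_of_nonneg_left hlast (by positivity)
    _ = (x⁻¹)^j * (2 * (x⁻¹ * (x+1)⁻¹)) := by rw [pow_succ]; ring
    _ = (x⁻¹)^j * (2 * (x⁻¹ - (x+1)⁻¹)) := by rw [hdiff]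
    _ = 2*((x⁻¹)^(j+1) - (x⁻¹)^j * (x+1)⁻¹) := by rw [pow_succ]; ring
    _ ≤ 2*((x⁻¹)^(j+1) - ((x+1)⁻¹)^(j+1)) := by linarith

lemma sum_inv_pow (j : ℕ) : ∀ (N n : ℕ), 1 ≤ n → n ≤ N + 1 →
    ∑ k ∈ Icc n N, ((k:ℝ)⁻¹)^(j+2)
      ≤ 2*(((n:ℝ)⁻¹)^(j+1) - ((((N+1:ℕ)):ℝ)⁻¹)^(j+1)) := by
  intro N
  induction N with
  | zero =>
      intro n h1 h2
      have : n = 1 := by omega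
      subst this
      simp
  | succ N ih =>
      intro n h1 h2
      rcases Nat.lt_or_ge n (N+2) with hlt | hge
      · have hle : n ≤ N + 1 := by omega
        rw [Finset.sum_Icc_succ_top hle]
        have hI := ih n h1 hle
        have hstep := inv_pow_step j (N+1) (by omega)
        push_cast at hI hstep ⊢
        linarith
      · have : n = N + 2 := by omega
        subst this
        rw [show Icc (N+2) (N+1) = ∅ from Finset.Icc_eq_empty (by omega)]
        simp only [Finset.sum_empty]
        have e : ((N+2:ℕ):ℝ) = ((N+1+1:ℕ):ℝ) := by push_cast; ring
        rw [e]
        simp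

lemma teles (g : ℕ → ℂ) (n N : ℕ) (h : n ≤ N + 1) :
    g n = g (N+1) + ∑ k ∈ Icc n N, (g k - g (k+1)) := by
  rw [← Finset.Ico_add_one_right_eq_Icc, Finset.sum_Ico_eq_sum_range]
  rw [show ∀ L, ∑ i ∈ range L, (g (n + i) - g (n + i + 1))
      = ∑ i ∈ range L, ((fun i => g (n + i)) i - (fun i => g (n + i)) (i+1)) from
    fun L => rfl]
  rw [Finset.sum_range_sub' (fun i => g (n + i))]
  show g n = g (N+1) + (g (n + 0) - g (n + (N + 1 - n)))
  rw [show n + (N + 1 - n) = N + 1 from by omega, show n + 0 = n from rfl]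
  ring

lemma main_bound (a1 a2 b1 s1 : ℂ) (hs : s1 = b1 - a1 - a2) (M : ℕ) :
    ∃ (C : ℝ) (N₂ : ℕ), ∀ n, N₂ ≤ n → ‖RR a1 a2 b1 s1 M n‖ ≤ C * ((n:ℝ)⁻¹)^(M+1) := by
  have hre : ∀ x : ℂ, -‖x‖ ≤ x.re := fun x => by
    have := Complex.abs_re_le_norm x
    exact (abs_le.mp this).1
  have hna1 := norm_nonneg a1
  have hna2 := norm_nonneg a2
  have hnb1 := norm_nonneg b1
  have hns1 := norm_nonneg s1
  have hM0 : (0:ℝ) ≤ M := Nat.cast_nonneg M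
  set B : ℝ := ‖a1‖ + ‖a2‖ + ‖b1‖ + ‖s1‖ + M + 2 with hB
  have hB2 : 2 ≤ B := by rw [hB]; linarith
  obtain ⟨N₁, hN₁⟩ := exists_nat_gt (2*B)
  set K₁ : ℝ := 4*‖b1*s1+a1*a2‖ with hK₁def
  set K₂ : ℝ := 2^(M+2) * ‖cc a1 a2 s1 (M+1)‖ / (M.factorial : ℝ) with hK₂def
  have hK₁ : 0 ≤ K₁ := by positivity
  have hK₂ : 0 ≤ K₂ := by positivity
  set R : ℕ → ℂ := RR a1 a2 b1 s1 M with hRdef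
  have hdiff : ∀ n, N₁ ≤ n →
      ‖R n - R (n+1)‖ ≤ K₁*((n:ℝ)⁻¹)^2 * ‖R n‖ + K₂*((n:ℝ)⁻¹)^(M+2) := by
    intro n hn
    have hnB : 2*B ≤ (n:ℝ) := le_trans (le_of_lt hN₁) (by exact_mod_cast hn)
    have hn0 : (0:ℝ) < n := by linarith
    have lb : ∀ x : ℂ, ‖x‖ ≤ B → (n:ℝ)/2 ≤ ‖x + n‖ := by
      intro x hx
      calc (n:ℝ)/2 ≤ (n:ℝ) - B := by linarith
        _ ≤ ‖(n:ℂ)‖ - ‖-x‖ := by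
            rw [Complex.norm_natCast, norm_neg]; linarith
        _ ≤ ‖(n:ℂ) - (-x)‖ := norm_sub_norm_le _ _
        _ = ‖x + n‖ := by rw [sub_neg_eq_add, add_comm]
    have hba1 : ‖a1‖ ≤ B := by rw [hB]; linarith
    have hba2 : ‖a2‖ ≤ B := by rw [hB]; linarith
    have hbb1 : ‖b1‖ ≤ B := by rw [hB]; linarith
    have hbs1 : ‖-s1‖ ≤ B := by rw [norm_neg, hB]; linarith
    have hb2 : (n:ℝ)/2 ≤ ‖b1 + (n:ℂ)‖ := lb b1 hbb1
    have hd2 : (n:ℝ)/2 ≤ ‖(n:ℂ) - s1‖ := by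
      have := lb (-s1) hbs1
      rwa [show -s1 + (n:ℂ) = (n:ℂ) - s1 from by ring] at this
    have nz : ∀ x : ℂ, (n:ℝ)/2 ≤ ‖x‖ → x ≠ 0 := by
      intro x hx h0
      rw [h0, norm_zero] at hx
      linarith
    have ha1 : a1 + (n:ℂ) ≠ 0 := nz _ (lb a1 hba1)
    have ha2 : a2 + (n:ℂ) ≠ 0 := nz _ (lb a2 hba2)
    have hb0 : b1 + (n:ℂ) ≠ 0 := nz _ hb2
    have hd0 : -s1 + (n:ℂ) ≠ 0 := nz _ (lb (-s1) hbs1)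
    have hGb : Complex.Gamma (b1 + n) ≠ 0 := by
      apply Complex.Gamma_ne_zero_of_re_pos
      simp only [Complex.add_re, Complex.natCast_re]
      have := hre b1
      linarith
    have hGd : Complex.Gamma (-s1 + n) ≠ 0 := by
      apply Complex.Gamma_ne_zero_of_re_pos
      simp only [Complex.add_re, Complex.neg_re, Complex.natCast_re]
      have := hre s1
      have h2 : s1.re ≤ ‖s1‖ := by
        have := Complex.abs_re_le_norm s1
        exact (abs_le.mp this).2
      linarith
    have hs2 : 2*(‖s1‖ + M + 2) ≤ (n:ℝ) := by rw [hB] at hnB; linarith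
    have hplow := pp_lower s1 M hs2
    have hppos : ∀ m, m ≤ M+1 → pp s1 m n ≠ 0 := by
      intro m hm h0
      have h1 := hplow m hm
      rw [h0, norm_zero] at h1
      have h2 : (0:ℝ) < ((n:ℝ)/2)^m := by positivity
      linarith
    have hdeq := R_diff a1 a2 b1 s1 hs M n ha1 ha2 hb0 hd0 hGb hGd
      (fun m hm => hppos m (by omega))
    rw [hRdef, hdeq]
    have hfactpos : (0:ℝ) < (M.factorial : ℝ) := by exact_mod_cast M.factorial_pos
    have hppM := hplow M (by omega)
    have hquartpos : (0:ℝ) < ((n:ℝ)/2)*((n:ℝ)/2) := by positivity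
    have hγ : ‖b1*s1+a1*a2‖ / (‖b1+(n:ℂ)‖ * ‖(n:ℂ)-s1‖)
        ≤ K₁*((n:ℝ)⁻¹)^2 := by
      have h1 : ‖b1*s1+a1*a2‖ / (‖b1+(n:ℂ)‖ * ‖(n:ℂ)-s1‖)
          ≤ ‖b1*s1+a1*a2‖ / (((n:ℝ)/2)*((n:ℝ)/2)) := by
        apply div_le_div_of_nonneg_left (norm_nonneg _) hquartpos
        apply mul_le_mul hb2 hd2 (by positivity) (le_trans (le_of_lt (by positivity)) hb2)
      have h2 : ‖b1*s1+a1*a2‖ / (((n:ℝ)/2)*((n:ℝ)/2)) = K₁*((n:ℝ)⁻¹)^2 := by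
        rw [hK₁def]
        field_simp
        ring
      linarith
    have hcc : (‖cc a1 a2 s1 (M+1)‖ / ((M.factorial : ℝ) * ‖pp s1 M n‖))
          / (‖b1+(n:ℂ)‖ * ‖(n:ℂ)-s1‖)
        ≤ K₂*((n:ℝ)⁻¹)^(M+2) := by
      have hppMpos : (0:ℝ) < ‖pp s1 M n‖ := lt_of_lt_of_le (by positivity) hppM
      have h1 : (‖cc a1 a2 s1 (M+1)‖ / ((M.factorial : ℝ) * ‖pp s1 M n‖))
            / (‖b1+(n:ℂ)‖ * ‖(n:ℂ)-s1‖)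
          ≤ (‖cc a1 a2 s1 (M+1)‖ / ((M.factorial : ℝ) * ((n:ℝ)/2)^M))
            / (((n:ℝ)/2)*((n:ℝ)/2)) := by
        apply div_le_div₀
        · positivity
        · apply div_le_div_of_nonneg_left (norm_nonneg _) (by positivity)
          exact mul_le_mul_of_nonneg_left hppM (le_of_lt hfactpos)
        · exact hquartpos
        · apply mul_le_mul hb2 hd2 (by positivity)
            (le_trans (le_of_lt (by positivity)) hb2)
      have h2 : (‖cc a1 a2 s1 (M+1)‖ / ((M.factorial : ℝ) * ((n:ℝ)/2)^M))
            / (((n:ℝ)/2)*((n:ℝ)/2)) = K₂*((n:ℝ)⁻¹)^(M+2) := by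
        rw [hK₂def]
        rw [div_pow, eq_comm]
        field_simp
        have e : ∀ k : ℕ, (n:ℝ)^k * ((n:ℝ)⁻¹)^k = 1 := fun k => by
          rw [← mul_pow, mul_inv_cancel₀ hn0.ne', one_pow]
        linear_combination (‖cc a1 a2 s1 (M + 1)‖ * 2^M * 4 * (n:ℝ)^M * ((n:ℝ)⁻¹)^M) * e 2
          + (‖cc a1 a2 s1 (M + 1)‖ * 2^M * 4) * e M
      linarith
    calc ‖-((b1*s1+a1*a2) / ((b1+(n:ℂ))*((n:ℂ)-s1))) * RR a1 a2 b1 s1 M n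
          - (cc a1 a2 s1 (M+1) / ((M.factorial : ℂ) * pp s1 M n))
              / ((b1+(n:ℂ))*((n:ℂ)-s1))‖
        ≤ ‖-((b1*s1+a1*a2) / ((b1+(n:ℂ))*((n:ℂ)-s1))) * RR a1 a2 b1 s1 M n‖
          + ‖(cc a1 a2 s1 (M+1) / ((M.factorial : ℂ) * pp s1 M n))
              / ((b1+(n:ℂ))*((n:ℂ)-s1))‖ := norm_sub_le _ _
      _ = ‖b1*s1+a1*a2‖ / (‖b1+(n:ℂ)‖ * ‖(n:ℂ)-s1‖) * ‖RR a1 a2 b1 s1 M n‖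
          + (‖cc a1 a2 s1 (M+1)‖ / ((M.factorial : ℝ) * ‖pp s1 M n‖))
              / (‖b1+(n:ℂ)‖ * ‖(n:ℂ)-s1‖) := by
            rw [norm_mul, norm_neg, norm_div, norm_mul, norm_div, norm_div, norm_mul,
              norm_mul, Complex.norm_natCast]
      _ ≤ K₁*((n:ℝ)⁻¹)^2 * ‖RR a1 a2 b1 s1 M n‖ + K₂*((n:ℝ)⁻¹)^(M+2) := by
            have := mul_le_mul_of_nonneg_right hγ (norm_nonneg (RR a1 a2 b1 s1 M n))
            linarith
  have hR0 : Tendsto R atTop (𝓝 0) := by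
    rw [hRdef]
    have := (ff_tendsto a1 a2 b1 s1 hs).sub (SS_tendsto a1 a2 s1 M)
    simp at this; exact this
  have hRnorm : Tendsto (fun n => ‖R n‖) atTop (𝓝 0) := by
    simpa using hR0.norm
  obtain ⟨N₃, hN₃⟩ := (eventually_atTop).mp
    (hRnorm.eventually_lt_const (by norm_num : (0:ℝ) < 1))
  set N₂ : ℕ := max (max N₁ N₃) 1 with hN₂def
  have hN₂₁ : N₁ ≤ N₂ := le_trans (le_max_left _ _) (le_max_left _ _)
  have hN₂₃ : N₃ ≤ N₂ := le_trans (le_max_right _ _) (le_max_left _ _)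
  have hN₂one : 1 ≤ N₂ := le_max_right _ _
  have step : ∀ (j : ℕ), j ≤ M → ∀ (C : ℝ), 0 ≤ C →
      (∀ n, N₂ ≤ n → ‖R n‖ ≤ C*((n:ℝ)⁻¹)^j) →
      ∀ n, N₂ ≤ n → ‖R n‖ ≤ (2*(K₁*C+K₂))*((n:ℝ)⁻¹)^(j+1) := by
    intro j hj C hC hbd n hn
    have hn1 : 1 ≤ n := le_trans hN₂one hn
    have key : ∀ N, n ≤ N → ‖R n‖ ≤ ‖R (N+1)‖ + (K₁*C+K₂) * (2*((n:ℝ)⁻¹)^(j+1)) := by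
      intro N hN
      have htel := teles R n N (by omega)
      have h1 : ‖R n‖ ≤ ‖R (N+1)‖ + ∑ k ∈ Icc n N, ‖R k - R (k+1)‖ := by
        rw [htel]
        refine le_trans (norm_add_le _ _) ?_
        gcongr
        exact norm_sum_le _ _
      have h2 : ∑ k ∈ Icc n N, ‖R k - R (k+1)‖
          ≤ ∑ k ∈ Icc n N, (K₁*C+K₂) * ((k:ℝ)⁻¹)^(j+2) := by
        apply Finset.sum_le_sum
        intro k hk
        obtain ⟨hk1, hk2⟩ := Finset.mem_Icc.mp hk
        have hkN₂ : N₂ ≤ k := le_trans hn hk1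
        have hk1' : 1 ≤ k := le_trans hN₂one hkN₂
        have hkinv1 : ((k:ℝ))⁻¹ ≤ 1 := by
          apply inv_le_one_of_one_le₀
          exact_mod_cast hk1'
        have hkinv0 : (0:ℝ) ≤ ((k:ℝ))⁻¹ := by positivity
        have hd1 := hdiff k (le_trans hN₂₁ hkN₂)
        have hb1 := hbd k hkN₂
        have e1 : K₁*((k:ℝ)⁻¹)^2 * ‖R k‖ ≤ K₁*((k:ℝ)⁻¹)^2 * (C*((k:ℝ)⁻¹)^j) :=
          mul_le_mul_of_nonneg_left hb1 (by positivity)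
        have e2 : ((k:ℝ)⁻¹)^(M+2) ≤ ((k:ℝ)⁻¹)^(j+2) :=
          pow_le_pow_of_le_one hkinv0 hkinv1 (by omega)
        have e3 : K₁*((k:ℝ)⁻¹)^2 * (C*((k:ℝ)⁻¹)^j) = K₁*C*((k:ℝ)⁻¹)^(j+2) := by
          rw [pow_add]; ring
        have e4 : K₂*((k:ℝ)⁻¹)^(M+2) ≤ K₂*((k:ℝ)⁻¹)^(j+2) :=
          mul_le_mul_of_nonneg_left e2 hK₂
        calc ‖R k - R (k+1)‖
            ≤ K₁*((k:ℝ)⁻¹)^2 * ‖R k‖ + K₂*((k:ℝ)⁻¹)^(M+2) := hd1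
          _ ≤ K₁*C*((k:ℝ)⁻¹)^(j+2) + K₂*((k:ℝ)⁻¹)^(j+2) := by linarith
          _ = (K₁*C+K₂) * ((k:ℝ)⁻¹)^(j+2) := by ring
      have h4 := sum_inv_pow j N n hn1 (by omega)
      have h5 : ∑ k ∈ Icc n N, ((k:ℝ)⁻¹)^(j+2) ≤ 2*((n:ℝ)⁻¹)^(j+1) := by
        have hpos : (0:ℝ) ≤ ((((N+1:ℕ)):ℝ)⁻¹)^(j+1) := by positivity
        linarith
      have h6 : ∑ k ∈ Icc n N, (K₁*C+K₂) * ((k:ℝ)⁻¹)^(j+2)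
          ≤ (K₁*C+K₂) * (2*((n:ℝ)⁻¹)^(j+1)) := by
        rw [← Finset.mul_sum]
        exact mul_le_mul_of_nonneg_left h5 (by positivity)
      linarith
    have hlim : Tendsto (fun N : ℕ => ‖R (N+1)‖ + (K₁*C+K₂) * (2*((n:ℝ)⁻¹)^(j+1)))
        atTop (𝓝 (0 + (K₁*C+K₂) * (2*((n:ℝ)⁻¹)^(j+1)))) := by
      apply Tendsto.add_const
      exact hRnorm.comp (tendsto_add_atTop_nat 1)
    have hfin := ge_of_tendsto hlim (by
      filter_upwards [eventually_ge_atTop n] with N hN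
      exact key N hN)
    calc ‖R n‖ ≤ 0 + (K₁*C+K₂) * (2*((n:ℝ)⁻¹)^(j+1)) := hfin
      _ = (2*(K₁*C+K₂))*((n:ℝ)⁻¹)^(j+1) := by ring
  have boot : ∀ j, j ≤ M + 1 →
      ∃ C : ℝ, 0 ≤ C ∧ ∀ n, N₂ ≤ n → ‖R n‖ ≤ C*((n:ℝ)⁻¹)^j := by
    intro j
    induction j with
    | zero =>
        intro _
        refine ⟨1, by norm_num, fun n hn => ?_⟩
        rw [pow_zero, mul_one]
        exact le_of_lt (hN₃ n (le_trans hN₂₃ hn))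
    | succ j ih =>
        intro hj
        obtain ⟨C, hC0, hCb⟩ := ih (by omega)
        exact ⟨2*(K₁*C+K₂), by positivity, step j (by omega) C hC0 hCb⟩
  obtain ⟨C, _, hC⟩ := boot (M+1) le_rfl
  exact ⟨C, N₂, hC⟩

end

end DingleAux

theorem dingle_expansion (M : ℕ) (a1 a2 b1 s1 : ℂ) (hs : s1 = b1 - a1 - a2) :
    (fun n : ℕ =>
        Complex.Gamma (a1 + n) * Complex.Gamma (a2 + n) /
            (Complex.Gamma (b1 + n) * Complex.Gamma (-s1 + n)) -
          (1 + ∑ m ∈ Icc 1 M,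
              (ascPochhammer ℂ m).eval (s1 + a1) * (ascPochhammer ℂ m).eval (s1 + a2) /
                ((m.factorial : ℂ) * (ascPochhammer ℂ m).eval (1 + s1 - n)))) =O[atTop]
      fun n : ℕ => ((n : ℝ))⁻¹ ^ (M + 1) := by
  have hSeq : ∀ n : ℕ, DingleAux.SS a1 a2 s1 M n
      = (1 + ∑ m ∈ Icc 1 M,
          (ascPochhammer ℂ m).eval (s1 + a1) * (ascPochhammer ℂ m).eval (s1 + a2) /
            ((m.factorial : ℂ) * (ascPochhammer ℂ m).eval (1 + s1 - n))) := by
    intro n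
    rw [DingleAux.SS]
    rw [show range (M+1) = insert 0 (Icc 1 M) from by
      ext x
      simp only [Finset.mem_range, Finset.mem_insert, Finset.mem_Icc, Nat.lt_succ_iff]
      omega]
    rw [Finset.sum_insert (by simp)]
    rw [DingleAux.tt_zero]
    rfl
  have heq : (fun n : ℕ =>
        Complex.Gamma (a1 + n) * Complex.Gamma (a2 + n) /
            (Complex.Gamma (b1 + n) * Complex.Gamma (-s1 + n)) -
          (1 + ∑ m ∈ Icc 1 M,
              (ascPochhammer ℂ m).eval (s1 + a1) * (ascPochhammer ℂ m).eval (s1 + a2) /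
                ((m.factorial : ℂ) * (ascPochhammer ℂ m).eval (1 + s1 - n))))
      = DingleAux.RR a1 a2 b1 s1 M := by
    funext n
    rw [DingleAux.RR, DingleAux.ff, hSeq n]
  rw [heq]
  obtain ⟨C, N₂, hC⟩ := DingleAux.main_bound a1 a2 b1 s1 hs M
  rw [isBigO_iff]
  refine ⟨C, ?_⟩
  filter_upwards [eventually_ge_atTop N₂] with n hn
  have hb := hC n hn
  have hnn : (0:ℝ) ≤ ((n:ℝ))⁻¹ ^ (M+1) := by positivity
  calc ‖DingleAux.RR a1 a2 b1 s1 M n‖ ≤ C * ((n:ℝ)⁻¹)^(M+1) := hb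
    _ = C * ‖((n:ℝ))⁻¹ ^ (M+1)‖ := by rw [Real.norm_of_nonneg hnn]
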